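/- The set Y⁰ = {b·x_k·b⁻¹ : b ∈ B} is closed in O_k = {u ∈ gl_n : u² = 0, rk(u) = k} with respect to the Zariski topology (equivalently: Y⁰ equals the intersection of O_k with a Zariski-closed subset of gl_n). -/
import Mathlib


open Matrix

def xk (K : Type*) [Field K] (n k : ℕ) : Matrix (Fin n) (Fin n) K :=
  fun r c => if (r : ℕ) + (n - k) = (c : ℕ) then 1 else 0

section Stmt9Aux

variable {K : Type*} [Field K]

lemma collapse_right {ι : Type*} [Fintype ι] [DecidableEq ι] (g : ι → K) (P : ι → Prop)
    [DecidablePred P] (s0 : ι) (h : ∀ s, P s ↔ s = s0) :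
    (∑ s, g s * (if P s then (1 : K) else 0)) = g s0 := by
  have he : ∀ s, g s * (if P s then (1 : K) else 0) = if s = s0 then g s else 0 := by
    intro s
    by_cases hs : P s
    · rw [if_pos hs, if_pos ((h s).mp hs), mul_one]
    · rw [if_neg hs, if_neg (fun e => hs ((h s).mpr e)), mul_zero]
  rw [Finset.sum_congr rfl fun s _ => he s]
  simp

lemma collapse_left {ι : Type*} [Fintype ι] [DecidableEq ι] (g : ι → K) (P : ι → Prop)
    [DecidablePred P] (s0 : ι) (h : ∀ s, P s ↔ s = s0) :
    (∑ s, (if P s then (1 : K) else 0) * g s) = g s0 := by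
  have he : ∀ s, (if P s then (1 : K) else 0) * g s = if s = s0 then g s else 0 := by
    intro s
    by_cases hs : P s
    · rw [if_pos hs, if_pos ((h s).mp hs), one_mul]
    · rw [if_neg hs, if_neg (fun e => hs ((h s).mpr e)), zero_mul]
  rw [Finset.sum_congr rfl fun s _ => he s]
  simp

omit [Field K] in
lemma u_congr {n : ℕ} (u : Matrix (Fin n) (Fin n) K) {a b r c : Fin n}
    (ha : (a : ℕ) = (r : ℕ)) (hb : (b : ℕ) = (c : ℕ)) : u a b = u r c := by
  rw [show a = r from Fin.ext ha, show b = c from Fin.ext hb]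

/-- Multiplication by `xk` on the right shifts columns. -/
lemma mul_xk {n k : ℕ} (M : Matrix (Fin n) (Fin n) K) (r c : Fin n) :
    (M * xk K n k) r c =
      if h : n - k ≤ (c : ℕ) then M r ⟨(c : ℕ) - (n - k), by have := c.2; omega⟩ else 0 := by
  rw [Matrix.mul_apply]
  simp only [xk]
  by_cases hc : n - k ≤ (c : ℕ)
  · rw [dif_pos hc]
    exact collapse_right (fun s => M r s) (fun s => (s : ℕ) + (n - k) = (c : ℕ))
      ⟨(c : ℕ) - (n - k), by have := c.2; omega⟩
      (fun s => by rw [Fin.eq_mk_iff_val_eq]; omega)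
  · rw [dif_neg hc]
    apply Finset.sum_eq_zero
    intro s _
    rw [if_neg (by omega), mul_zero]

lemma xk_mul_xk {n k : ℕ} (hk : 2 * k ≤ n) : xk K n k * xk K n k = 0 := by
  ext r c
  rw [Matrix.mul_apply]
  simp only [Matrix.zero_apply]
  apply Finset.sum_eq_zero
  intro s _
  simp only [xk]
  by_cases h1 : (r : ℕ) + (n - k) = (s : ℕ)
  · rw [if_pos h1, one_mul, if_neg (by have := c.2; omega)]
  · rw [if_neg h1, zero_mul]

lemma rank_xk {n k : ℕ} (hk : 2 * k ≤ n) : (xk K n k).rank = k := by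
  classical
  have hxxt : xk K n k * (xk K n k)ᵀ =
      diagonal (fun r : Fin n => if (r : ℕ) < k then (1 : K) else 0) := by
    ext r r'
    rw [Matrix.mul_apply, Matrix.diagonal_apply]
    simp only [Matrix.transpose_apply, xk]
    by_cases hr : (r : ℕ) + (n - k) < n
    · rw [collapse_left (ι := Fin n)
        (fun s => if (r' : ℕ) + (n - k) = (s : ℕ) then (1 : K) else 0)
        (fun s => (r : ℕ) + (n - k) = (s : ℕ)) ⟨(r : ℕ) + (n - k), hr⟩
        (fun s => by rw [Fin.eq_mk_iff_val_eq]; omega)]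
      show (if (r' : ℕ) + (n - k) = (r : ℕ) + (n - k) then (1 : K) else 0) =
        if r = r' then (if (r : ℕ) < k then (1 : K) else 0) else 0
      by_cases he : r = r'
      · subst he
        rw [if_pos rfl, if_pos rfl, if_pos (by omega)]
      · rw [if_neg (fun e => he (Fin.ext (by omega))), if_neg he]
    · rw [Finset.sum_eq_zero (fun s _ => by
        rw [if_neg (by have := s.2; omega), zero_mul])]
      by_cases he : r = r'
      · subst he
        rw [if_pos rfl, if_neg (by omega)]
      · rw [if_neg he]
  have hDx : diagonal (fun r : Fin n => if (r : ℕ) < k then (1 : K) else 0) * xk K n k =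
      xk K n k := by
    ext r c
    rw [Matrix.diagonal_mul]
    by_cases hr : (r : ℕ) < k
    · rw [if_pos hr, one_mul]
    · rw [if_neg hr, zero_mul,
        show xk K n k r c = 0 from by
          simp only [xk]; rw [if_neg (by have := c.2; omega)]]
  have hcard : Fintype.card {i : Fin n // (if (i : ℕ) < k then (1 : K) else 0) ≠ 0} = k := by
    have hkn : k ≤ n := by omega
    have e : {i : Fin n // (if (i : ℕ) < k then (1 : K) else 0) ≠ 0} ≃ Fin k :=
      { toFun := fun s => ⟨(s.1 : ℕ), by
          by_cases hs : (s.1 : ℕ) < k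
          · exact hs
          · exact absurd (if_neg hs) s.2⟩
        invFun := fun j => ⟨⟨(j : ℕ), lt_of_lt_of_le j.2 hkn⟩, by
          show (if ((j : ℕ)) < k then (1 : K) else 0) ≠ 0
          rw [if_pos j.2]
          exact one_ne_zero⟩
        left_inv := fun s => Subtype.ext (Fin.ext rfl)
        right_inv := fun j => Fin.ext rfl }
    rw [Fintype.card_congr e, Fintype.card_fin]
  have hrkD : (diagonal (fun r : Fin n => if (r : ℕ) < k then (1 : K) else 0)).rank = k := by
    rw [Matrix.rank_diagonal]
    exact hcard
  have h1 : (xk K n k).rank ≤ k := by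
    calc (xk K n k).rank
        = (diagonal (fun r : Fin n => if (r : ℕ) < k then (1 : K) else 0) * xk K n k).rank := by
          rw [hDx]
      _ ≤ (diagonal (fun r : Fin n => if (r : ℕ) < k then (1 : K) else 0)).rank :=
          Matrix.rank_mul_le_left _ _
      _ = k := hrkD
  have h2 : k ≤ (xk K n k).rank := by
    calc k = (diagonal (fun r : Fin n => if (r : ℕ) < k then (1 : K) else 0)).rank := hrkD.symm
      _ = (xk K n k * (xk K n k)ᵀ).rank := by rw [hxxt]
      _ ≤ (xk K n k).rank := Matrix.rank_mul_le_left _ _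
  omega

lemma isUnit_of_rank_eq_card {k : ℕ} (T : Matrix (Fin k) (Fin k) K) (h : T.rank = k) :
    IsUnit T := by
  classical
  rw [← Matrix.mulVec_surjective_iff_isUnit]
  have hrange : LinearMap.range T.mulVecLin = ⊤ := by
    apply Submodule.eq_top_of_finrank_eq
    rw [show Module.finrank K ↥(LinearMap.range T.mulVecLin) = T.rank from rfl, h,
      Module.finrank_fin_fun]
  have hs : Function.Surjective T.mulVecLin := LinearMap.range_eq_top.mp hrange
  rw [← Matrix.coe_mulVecLin]
  exact hs

variable {n k : ℕ}

/-- The `k × k` upper-right block of `u`. -/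
def Tmat (hk : 2 * k ≤ n) (u : Matrix (Fin n) (Fin n) K) : Matrix (Fin k) (Fin k) K :=
  fun i j => u ⟨(i : ℕ), by have := i.2; omega⟩ ⟨(j : ℕ) + (n - k), by have := j.2; omega⟩

/-- The conjugating matrix: `T` in the upper-left `k × k` corner, identity elsewhere. -/
def bmat (hk : 2 * k ≤ n) (u : Matrix (Fin n) (Fin n) K) : Matrix (Fin n) (Fin n) K :=
  fun r c => if hrc : (r : ℕ) < k ∧ (c : ℕ) < k then Tmat hk u ⟨(r : ℕ), hrc.1⟩ ⟨(c : ℕ), hrc.2⟩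
             else if r = c then 1 else 0

lemma rank_T_le (hk : 2 * k ≤ n) (u : Matrix (Fin n) (Fin n) K) :
    (Tmat hk u).rank ≤ u.rank := by
  classical
  have hTe : Tmat hk u =
      (Matrix.of fun (i : Fin k) (r : Fin n) => if (i : ℕ) = (r : ℕ) then (1 : K) else 0) *
      (u * Matrix.of fun (c : Fin n) (j : Fin k) =>
        if (j : ℕ) + (n - k) = (c : ℕ) then (1 : K) else 0) := by
    ext i j
    rw [Matrix.mul_apply]
    simp only [Matrix.of_apply]
    rw [collapse_left (ι := Fin n)
      (fun r => (u * Matrix.of fun (c : Fin n) (j : Fin k) =>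
        if (j : ℕ) + (n - k) = (c : ℕ) then (1 : K) else 0) r j)
      (fun r => (i : ℕ) = (r : ℕ)) ⟨(i : ℕ), lt_of_lt_of_le i.2 (by omega)⟩
      (fun r => by rw [Fin.eq_mk_iff_val_eq]; omega)]
    rw [Matrix.mul_apply]
    simp only [Matrix.of_apply]
    rw [collapse_right (ι := Fin n)
      (fun c => u ⟨(i : ℕ), lt_of_lt_of_le i.2 (by omega)⟩ c)
      (fun c => (j : ℕ) + (n - k) = (c : ℕ)) ⟨(j : ℕ) + (n - k), by have := j.2; omega⟩
      (fun c => by rw [Fin.eq_mk_iff_val_eq]; omega)]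
    rfl
  calc (Tmat hk u).rank
      = ((Matrix.of fun (i : Fin k) (r : Fin n) => if (i : ℕ) = (r : ℕ) then (1 : K) else 0) *
        (u * Matrix.of fun (c : Fin n) (j : Fin k) =>
          if (j : ℕ) + (n - k) = (c : ℕ) then (1 : K) else 0)).rank := by rw [← hTe]
    _ ≤ (u * Matrix.of fun (c : Fin n) (j : Fin k) =>
          if (j : ℕ) + (n - k) = (c : ℕ) then (1 : K) else 0).rank :=
        Matrix.rank_mul_le_right _ _
    _ ≤ u.rank := Matrix.rank_mul_le_left _ _

lemma rank_le_T (hk : 2 * k ≤ n) (u : Matrix (Fin n) (Fin n) K)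
    (hvan : ∀ i c : Fin n, (c : ℕ) < (i : ℕ) + (n - k) → u i c = 0) :
    u.rank ≤ (Tmat hk u).rank := by
  classical
  have hue : u =
      (Matrix.of fun (r : Fin n) (i : Fin k) => if (r : ℕ) = (i : ℕ) then (1 : K) else 0) *
      (Tmat hk u * Matrix.of fun (j : Fin k) (c : Fin n) =>
        if (j : ℕ) + (n - k) = (c : ℕ) then (1 : K) else 0) := by
    ext r c
    rw [Matrix.mul_apply]
    simp only [Matrix.of_apply]
    by_cases hr : (r : ℕ) < k
    · rw [collapse_left (ι := Fin k)
        (fun i => (Tmat hk u * Matrix.of fun (j : Fin k) (c : Fin n) =>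
          if (j : ℕ) + (n - k) = (c : ℕ) then (1 : K) else 0) i c)
        (fun i : Fin k => (r : ℕ) = (i : ℕ)) ⟨(r : ℕ), hr⟩
        (fun i => by rw [Fin.eq_mk_iff_val_eq]; omega)]
      rw [Matrix.mul_apply]
      simp only [Matrix.of_apply]
      by_cases hc : n - k ≤ (c : ℕ)
      · rw [collapse_right (ι := Fin k)
          (fun j => Tmat hk u ⟨(r : ℕ), hr⟩ j)
          (fun j : Fin k => (j : ℕ) + (n - k) = (c : ℕ))
          ⟨(c : ℕ) - (n - k), by have := c.2; omega⟩
          (fun j => by rw [Fin.eq_mk_iff_val_eq]; omega)]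
        exact (u_congr u rfl (show (c : ℕ) - (n - k) + (n - k) = (c : ℕ) by omega)).symm
      · rw [Finset.sum_eq_zero (fun j _ => by
          rw [if_neg (show ¬ (j : ℕ) + (n - k) = (c : ℕ) by omega), mul_zero])]
        exact hvan r c (by omega)
    · rw [Finset.sum_eq_zero (fun i _ => by
        rw [if_neg (show ¬ (r : ℕ) = (i : ℕ) from by have := i.2; omega), zero_mul])]
      exact hvan r c (by have := c.2; omega)
  calc u.rank
      = ((Matrix.of fun (r : Fin n) (i : Fin k) => if (r : ℕ) = (i : ℕ) then (1 : K) else 0) *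
        (Tmat hk u * Matrix.of fun (j : Fin k) (c : Fin n) =>
          if (j : ℕ) + (n - k) = (c : ℕ) then (1 : K) else 0)).rank := by rw [← hue]
    _ ≤ (Tmat hk u * Matrix.of fun (j : Fin k) (c : Fin n) =>
          if (j : ℕ) + (n - k) = (c : ℕ) then (1 : K) else 0).rank :=
        Matrix.rank_mul_le_right _ _
    _ ≤ (Tmat hk u).rank := Matrix.rank_mul_le_left _ _

lemma Tmat_tri (hk : 2 * k ≤ n) (u : Matrix (Fin n) (Fin n) K)
    (hvan : ∀ i c : Fin n, (c : ℕ) < (i : ℕ) + (n - k) → u i c = 0)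
    (i j : Fin k) (hij : (j : ℕ) < (i : ℕ)) : Tmat hk u i j = 0 :=
  hvan _ _ (by exact Nat.add_lt_add_right hij (n - k))

lemma bmat_tri (hk : 2 * k ≤ n) (u : Matrix (Fin n) (Fin n) K)
    (hvan : ∀ i c : Fin n, (c : ℕ) < (i : ℕ) + (n - k) → u i c = 0)
    (i j : Fin n) (hij : j < i) : bmat hk u i j = 0 := by
  simp only [bmat]
  by_cases hrc : (i : ℕ) < k ∧ (j : ℕ) < k
  · rw [dif_pos hrc]
    exact Tmat_tri hk u hvan _ _ hij
  · rw [dif_neg hrc, if_neg (fun e => absurd e (Fin.ne_of_gt hij))]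

lemma key_eq (hk : 2 * k ≤ n) (u : Matrix (Fin n) (Fin n) K)
    (hvan : ∀ i c : Fin n, (c : ℕ) < (i : ℕ) + (n - k) → u i c = 0) :
    u * bmat hk u = bmat hk u * xk K n k := by
  classical
  ext r c
  rw [mul_xk, Matrix.mul_apply]
  have hterm : ∀ s : Fin n, u r s * bmat hk u s c = u r s * (if s = c then (1 : K) else 0) := by
    intro s
    by_cases hus : u r s = 0
    · rw [hus, zero_mul, zero_mul]
    · have hs : (r : ℕ) + (n - k) ≤ (s : ℕ) := by
        by_contra hcon
        exact hus (hvan r s (by omega))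
      have hsk : ¬ (s : ℕ) < k := by have := s.2; omega
      simp only [bmat]
      rw [dif_neg (fun hrc => hsk hrc.1)]
  rw [Finset.sum_congr rfl fun s _ => hterm s,
    collapse_right (fun s => u r s) (fun s : Fin n => s = c) c (fun s => Iff.rfl)]
  by_cases hc : n - k ≤ (c : ℕ)
  · rw [dif_pos hc]
    simp only [bmat]
    by_cases hr : (r : ℕ) < k
    · rw [dif_pos (show (r : ℕ) < k ∧ (((⟨(c : ℕ) - (n - k), by have := c.2; omega⟩ : Fin n)) : ℕ) < k
        from ⟨hr, by show (c : ℕ) - (n - k) < k; have := c.2; omega⟩)]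
      exact (u_congr u rfl (show (c : ℕ) - (n - k) + (n - k) = (c : ℕ) by omega)).symm
    · rw [dif_neg (fun hrc => hr hrc.1),
        if_neg (fun e => by
          have h' : (r : ℕ) = (c : ℕ) - (n - k) := by rw [e]
          have := c.2
          omega)]
      exact hvan r c (by have := c.2; omega)
  · rw [dif_neg hc]
    exact hvan r c (by omega)

end Stmt9Aux

/-- `Y⁰ = {b·x_k·b⁻¹ : b ∈ B}` is Zariski-closed in `O_k = {u² = 0, rk u = k}`:
it equals the intersection of `O_k` with the common zero locus of a set of
polynomials in the matrix entries. -/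
theorem stmt_9 (K : Type*) [Field K] [IsAlgClosed K] (n k : ℕ) (h : 2 * k ≤ n) :
    ∃ S : Set (MvPolynomial (Fin n × Fin n) K),
      {u : Matrix (Fin n) (Fin n) K | ∃ b : GL (Fin n) K,
          (∀ i j : Fin n, j < i → (b : Matrix (Fin n) (Fin n) K) i j = 0) ∧
          u = (b : Matrix (Fin n) (Fin n) K) * xk K n k *
                ((b⁻¹ : GL (Fin n) K) : Matrix (Fin n) (Fin n) K)} =
        {u : Matrix (Fin n) (Fin n) K | u * u = 0 ∧ u.rank = k} ∩
          {u : Matrix (Fin n) (Fin n) K |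
            ∀ p ∈ S, MvPolynomial.eval (fun q : Fin n × Fin n => u q.1 q.2) p = 0} := by
  classical
  refine ⟨(fun q : Fin n × Fin n => (MvPolynomial.X q : MvPolynomial (Fin n × Fin n) K)) ''
    {q : Fin n × Fin n | (q.2 : ℕ) < (q.1 : ℕ) + (n - k)}, ?_⟩
  have hS : ∀ u : Matrix (Fin n) (Fin n) K,
      (∀ p ∈ (fun q : Fin n × Fin n => (MvPolynomial.X q : MvPolynomial (Fin n × Fin n) K)) ''
          {q : Fin n × Fin n | (q.2 : ℕ) < (q.1 : ℕ) + (n - k)},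
        MvPolynomial.eval (fun q : Fin n × Fin n => u q.1 q.2) p = 0) ↔
      (∀ i c : Fin n, (c : ℕ) < (i : ℕ) + (n - k) → u i c = 0) := by
    intro u
    constructor
    · intro hp i c hc
      have := hp (MvPolynomial.X (i, c)) ⟨(i, c), hc, rfl⟩
      simpa using this
    · rintro hv p ⟨⟨i, c⟩, hq, rfl⟩
      simpa using hv i c hq
  ext u
  simp only [Set.mem_setOf_eq, Set.mem_inter_iff]
  constructor
  · rintro ⟨b, hb, rfl⟩
    have h1 : ((b⁻¹ : GL (Fin n) K) : Matrix (Fin n) (Fin n) K) *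
        (b : Matrix (Fin n) (Fin n) K) = 1 := Units.inv_mul b
    have hdb : IsUnit (b : Matrix (Fin n) (Fin n) K).det :=
      (Matrix.isUnit_iff_isUnit_det _).mp b.isUnit
    have hdbi : IsUnit ((b⁻¹ : GL (Fin n) K) : Matrix (Fin n) (Fin n) K).det :=
      (Matrix.isUnit_iff_isUnit_det _).mp (b⁻¹ : GL (Fin n) K).isUnit
    refine ⟨⟨?_, ?_⟩, ?_⟩
    · calc ((b : Matrix (Fin n) (Fin n) K) * xk K n k *
            ((b⁻¹ : GL (Fin n) K) : Matrix (Fin n) (Fin n) K)) *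
            ((b : Matrix (Fin n) (Fin n) K) * xk K n k *
            ((b⁻¹ : GL (Fin n) K) : Matrix (Fin n) (Fin n) K)) =
          (b : Matrix (Fin n) (Fin n) K) * (xk K n k *
            ((((b⁻¹ : GL (Fin n) K) : Matrix (Fin n) (Fin n) K) * (b : Matrix (Fin n) (Fin n) K)) *
              (xk K n k * ((b⁻¹ : GL (Fin n) K) : Matrix (Fin n) (Fin n) K)))) := by
            simp only [Matrix.mul_assoc]
        _ = 0 := by
            rw [h1, one_mul, ← Matrix.mul_assoc (xk K n k), xk_mul_xk h, Matrix.zero_mul,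
              Matrix.mul_zero]
    · rw [Matrix.rank_mul_eq_left_of_isUnit_det _ _ hdbi,
        Matrix.rank_mul_eq_right_of_isUnit_det _ _ hdb, rank_xk h]
    · rw [hS]
      have hbinv : ∀ i j : Fin n, j < i →
          ((b⁻¹ : GL (Fin n) K) : Matrix (Fin n) (Fin n) K) i j = 0 := by
        have hBT : Matrix.BlockTriangular (b : Matrix (Fin n) (Fin n) K) id :=
          fun i j hij => hb i j hij
        haveI : Invertible (b : Matrix (Fin n) (Fin n) K) := b.isUnit.invertible
        have htri := Matrix.blockTriangular_inv_of_blockTriangular hBT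
        intro i j hij
        have e : ((b⁻¹ : GL (Fin n) K) : Matrix (Fin n) (Fin n) K) =
            ((b : Matrix (Fin n) (Fin n) K))⁻¹ := Matrix.coe_units_inv b
        rw [e]
        exact htri hij
      intro i c hc
      rw [Matrix.mul_apply]
      apply Finset.sum_eq_zero
      intro s _
      rw [mul_xk]
      by_cases hs : n - k ≤ (s : ℕ)
      · rw [dif_pos hs]
        by_cases h2 : (s : ℕ) - (n - k) < (i : ℕ)
        · rw [hb i ⟨(s : ℕ) - (n - k), by have := s.2; omega⟩
            (show ((s : ℕ) - (n - k)) < (i : ℕ) by omega), zero_mul]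
        · rw [hbinv s c (show (c : ℕ) < (s : ℕ) by omega), mul_zero]
      · rw [dif_neg hs, zero_mul]
  · rintro ⟨⟨hu2, hrk⟩, hpoly⟩
    have hvan : ∀ i c : Fin n, (c : ℕ) < (i : ℕ) + (n - k) → u i c = 0 := (hS u).mp hpoly
    have hrkT : (Tmat h u).rank = k := by
      have h1 := rank_T_le h u
      have h2 := rank_le_T h u hvan
      omega
    have hTu : IsUnit (Tmat h u) := isUnit_of_rank_eq_card _ hrkT
    have hTtri : Matrix.BlockTriangular (Tmat h u) id := fun i j hij =>
      Tmat_tri h u hvan i j hij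
    have hTdiag : ∀ i : Fin k, Tmat h u i i ≠ 0 := by
      intro i hi
      have hdet : (Tmat h u).det ≠ 0 :=
        ((Matrix.isUnit_iff_isUnit_det _).mp hTu).ne_zero
      apply hdet
      rw [Matrix.det_of_upperTriangular hTtri]
      exact Finset.prod_eq_zero (Finset.mem_univ i) hi
    have hbtri : ∀ i j : Fin n, j < i → bmat h u i j = 0 := bmat_tri h u hvan
    have hbBT : Matrix.BlockTriangular (bmat h u) id := fun i j hij => hbtri i j hij
    have hbdet : (bmat h u).det ≠ 0 := by
      rw [Matrix.det_of_upperTriangular hbBT, Finset.prod_ne_zero_iff]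
      intro r _
      simp only [bmat]
      by_cases hr : (r : ℕ) < k
      · rw [dif_pos ⟨hr, hr⟩]
        exact hTdiag ⟨(r : ℕ), hr⟩
      · rw [dif_neg (fun hrc => hr hrc.1)]
        simp
    have hbu : IsUnit (bmat h u) := (Matrix.isUnit_iff_isUnit_det _).mpr hbdet.isUnit
    obtain ⟨bu, hbu_eq⟩ := hbu
    have hmulinv : (bu : Matrix (Fin n) (Fin n) K) *
        ((bu⁻¹ : (Matrix (Fin n) (Fin n) K)ˣ) : Matrix (Fin n) (Fin n) K) = 1 := Units.mul_inv bu
    refine ⟨bu, fun i j hij => by rw [hbu_eq]; exact hbtri i j hij, ?_⟩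
    have hkey := key_eq h u hvan
    calc u = u * ((bu : Matrix (Fin n) (Fin n) K) *
          ((bu⁻¹ : (Matrix (Fin n) (Fin n) K)ˣ) : Matrix (Fin n) (Fin n) K)) := by
          rw [hmulinv, mul_one]
      _ = (u * (bu : Matrix (Fin n) (Fin n) K)) *
          ((bu⁻¹ : (Matrix (Fin n) (Fin n) K)ˣ) : Matrix (Fin n) (Fin n) K) := by
          rw [Matrix.mul_assoc]
      _ = (bu : Matrix (Fin n) (Fin n) K) * xk K n k *
          ((bu⁻¹ : (Matrix (Fin n) (Fin n) K)ˣ) : Matrix (Fin n) (Fin n) K) := by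
          rw [hbu_eq, hkey]
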